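/- Suppose every continuous curve f : [0,1] → E is Lebesgue–Pettis integrable. Then for every continuous g : [0,1] → E and every non-atomic Borel probability measure ρ on [0,1], the pushforward measure ρ ∘ g⁻¹ has a barycenter in E. -/

import Mathlib

open MeasureTheory Set
open scoped ENNReal

variable {E : Type*} [AddCommGroup E] [Module ℝ E] [TopologicalSpace E]
  [IsTopologicalAddGroup E] [ContinuousSMul ℝ E] [LocallyConvexSpace ℝ E] [T2Space E]
  [MeasurableSpace E] [BorelSpace E]

def IsBarycenter (μ : Measure E) (r : E) : Prop :=
  ∀ e' : E →L[ℝ] ℝ, Integrable (fun y => e' y) μ ∧ e' r = ∫ y, e' y ∂μ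

def IsPettisIntegral {X : Type*} [MeasurableSpace X] (ν : Measure X) (f : X → E) (v : E) : Prop :=
  ∀ e' : E →L[ℝ] ℝ, Integrable (fun x => e' (f x)) ν ∧ e' v = ∫ x, e' (f x) ∂ν

section Aux

open ProbabilityTheory Filter Topology Function

lemma cdf_continuous_of_noAtoms (μ : Measure ℝ) [IsProbabilityMeasure μ]
    (h : ∀ x, μ {x} = 0) : Continuous (cdf μ) := by
  rw [continuous_iff_continuousAt]
  intro x
  rw [(monotone_cdf μ).continuousAt_iff_leftLim_eq_rightLim]
  have hr : rightLim (⇑(cdf μ)) x = (cdf μ) x := by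
    rw [← (monotone_cdf μ).continuousWithinAt_Ioi_iff_rightLim_eq]
    exact ((cdf μ).right_continuous x).mono Ioi_subset_Ici_self
  have hs := (cdf μ).measure_singleton x
  rw [measure_cdf, h x, eq_comm, ENNReal.ofReal_eq_zero, sub_nonpos] at hs
  have hl : leftLim (⇑(cdf μ)) x = (cdf μ) x :=
    le_antisymm ((monotone_cdf μ).leftLim_le le_rfl) hs
  rw [hl, hr]

end Aux

local notation "II" => Set.Icc (0:ℝ) 1

open ProbabilityTheory ENNReal in
theorem stmt6
    (hPettis : ∀ f : Icc (0:ℝ) 1 → E, Continuous f → ∃ v, IsPettisIntegral volume f v)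
    (g : Icc (0:ℝ) 1 → E) (hg : Continuous g)
    (ρ : Measure (Icc (0:ℝ) 1)) [IsProbabilityMeasure ρ]
    (hna : ∀ x, ρ {x} = 0) :
    ∃ r : E, IsBarycenter (ρ.map g) r := by
  classical
  have hval : Measurable (Subtype.val : II → ℝ) := measurable_subtype_coe
  have hvdef : (volume : Measure II) = volume.comap Subtype.val := rfl
  have himg : ∀ s' : Set II, MeasurableSet s' → MeasurableSet (Subtype.val '' s') :=
    fun _ hs' => measurableSet_Icc.subtype_image hs'
  -- the averaged measure on the interval
  set σ₀ : Measure II := (2:ℝ≥0∞)⁻¹ • (ρ + volume) with hσ₀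
  have hvolII : (volume : Measure II) Set.univ = 1 := by
    rw [hvdef, Measure.comap_apply _ Subtype.val_injective himg _ MeasurableSet.univ,
      Set.image_univ, Subtype.range_coe, Real.volume_Icc]
    norm_num
  haveI hσ₀p : IsProbabilityMeasure σ₀ := by
    constructor
    rw [hσ₀]
    simp only [Measure.smul_apply, Measure.add_apply, measure_univ, hvolII, smul_eq_mul]
    rw [show (1:ℝ≥0∞) + 1 = 2 by norm_num, ENNReal.inv_mul_cancel (by norm_num) (by norm_num)]
  -- push forward to ℝ
  set μ : Measure ℝ := σ₀.map Subtype.val with hμ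
  haveI hμp : IsProbabilityMeasure μ := by
    constructor
    rw [hμ, Measure.map_apply hval MeasurableSet.univ, Set.preimage_univ, measure_univ]
  have hμ_apply : ∀ s : Set ℝ, MeasurableSet s → μ s = σ₀ (Subtype.val ⁻¹' s) := by
    intro s hs
    rw [hμ, Measure.map_apply hval hs]
  -- description of μ on sets
  have hσ₀_apply : ∀ s : Set II, MeasurableSet s →
      σ₀ s = (2:ℝ≥0∞)⁻¹ * (ρ s + (volume : Measure II) s) := by
    intro s _
    rw [hσ₀]
    simp only [Measure.smul_apply, Measure.add_apply, smul_eq_mul]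
  -- no atoms for μ
  have hμa : ∀ x : ℝ, μ {x} = 0 := by
    intro x
    rw [hμ_apply _ (measurableSet_singleton x)]
    by_cases hx : x ∈ II
    · have : (Subtype.val ⁻¹' {x} : Set II) = {⟨x, hx⟩} := by
        ext y; simp [Subtype.ext_iff]
      rw [this, hσ₀_apply _ (measurableSet_singleton _), hna]
      have hv : (volume : Measure II) {(⟨x, hx⟩ : II)} = 0 := by
        rw [hvdef,
          Measure.comap_apply _ Subtype.val_injective himg _ (measurableSet_singleton _)]
        simp
      rw [hv]
      simp
    · have : (Subtype.val ⁻¹' {x} : Set II) = ∅ := by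
        ext y; simp only [Set.mem_preimage, Set.mem_singleton_iff, Set.mem_empty_iff_false,
          iff_false]
        intro h; exact hx (h ▸ y.2)
      rw [this, measure_empty]
  -- the cdf
  set F : ℝ → ℝ := ⇑(cdf μ) with hF
  have hFc : Continuous F := cdf_continuous_of_noAtoms μ hμa
  have hIic : ∀ b : ℝ, ENNReal.ofReal (F b) = μ (Iic b) := fun b => ofReal_cdf μ b
  have hvol_Iic : ∀ b : II, (volume : Measure II) (Iic b) = ENNReal.ofReal b.val := by
    intro b
    rw [hvdef,
      Measure.comap_apply _ Subtype.val_injective himg _ measurableSet_Iic]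
    have himg : (Subtype.val '' (Iic b) : Set ℝ) = Icc 0 b.val := by
      ext y
      constructor
      · rintro ⟨x, hx, rfl⟩
        exact ⟨x.2.1, Subtype.coe_le_coe.2 hx⟩
      · rintro ⟨hy0, hyb⟩
        exact ⟨⟨y, hy0, le_trans hyb b.2.2⟩, Set.mem_Iic.2 hyb, rfl⟩
    rw [himg, Real.volume_Icc, sub_zero]
  have hμIic : ∀ b : II, μ (Iic b.val) = σ₀ (Iic b) := by
    intro b
    rw [hμ_apply _ measurableSet_Iic]
    have hpre : (Subtype.val ⁻¹' Iic (b:ℝ) : Set II) = Iic b := by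
      ext y; exact Iff.rfl
    rw [hpre]
  -- F 0 = 0
  have hF0 : F 0 = 0 := by
    have h0 : μ (Iic (0:ℝ)) = 0 := by
      rw [hμIic ⟨0, le_refl 0, zero_le_one⟩]
      have : (Iic (⟨0, le_refl 0, zero_le_one⟩ : II)) = {(⟨0, le_refl 0, zero_le_one⟩ : II)} := by
        ext y
        simp only [Set.mem_Iic, Set.mem_singleton_iff]
        constructor
        · intro h
          exact Subtype.ext (le_antisymm (Subtype.coe_le_coe.2 h) y.2.1)
        · rintro rfl; exact le_rfl
      rw [this, hσ₀_apply _ (measurableSet_singleton _), hna]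
      have hv : (volume : Measure II) {(⟨0, le_refl 0, zero_le_one⟩ : II)} = 0 := by
        rw [hvdef,
          Measure.comap_apply _ Subtype.val_injective himg _ (measurableSet_singleton _)]
        simp
      rw [hv]
      simp
    have := hIic 0
    rw [h0, ENNReal.ofReal_eq_zero] at this
    exact le_antisymm this (cdf_nonneg μ 0)
  -- F 1 = 1
  have hF1 : F 1 = 1 := by
    have h1 : μ (Iic (1:ℝ)) = 1 := by
      rw [hμ_apply _ measurableSet_Iic]
      have : (Subtype.val ⁻¹' (Iic (1:ℝ)) : Set II) = Set.univ := by
        ext y; simpa using y.2.2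
      rw [this, measure_univ]
    have := hIic 1
    rw [h1, ENNReal.ofReal_eq_one] at this
    exact this
  -- strict monotonicity on II
  have hFs : StrictMonoOn F II := by
    intro x hx y hy hxy
    have hIoc : μ (Ioc x y) > 0 := by
      rw [hμ_apply _ measurableSet_Ioc, hσ₀_apply _ (hval measurableSet_Ioc)]
      have hv : (volume : Measure II) (Subtype.val ⁻¹' Ioc x y) = ENNReal.ofReal (y - x) := by
        rw [hvdef,
          Measure.comap_apply _ Subtype.val_injective himg _ (hval measurableSet_Ioc)]
        have : Subtype.val '' (Subtype.val ⁻¹' Ioc x y : Set II) = Ioc x y := by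
          rw [Subtype.image_preimage_coe]
          exact Set.inter_eq_right.2 (fun z hz => ⟨le_trans hx.1 hz.1.le, le_trans hz.2 hy.2⟩)
        rw [this, Real.volume_Ioc]
      rw [hv]
      have hpos : (0:ℝ≥0∞) < ENNReal.ofReal (y - x) := by
        rw [ENNReal.ofReal_pos]; linarith
      have h2 : (0:ℝ≥0∞) < (2:ℝ≥0∞)⁻¹ := by simp
      calc (0:ℝ≥0∞) < (2:ℝ≥0∞)⁻¹ * ENNReal.ofReal (y - x) := by
            exact ENNReal.mul_pos h2.ne' hpos.ne'
        _ ≤ (2:ℝ≥0∞)⁻¹ * (ρ (Subtype.val ⁻¹' Ioc x y) + ENNReal.ofReal (y - x)) := by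
            gcongr
            exact le_add_self
    have hlt : μ (Iic x) < μ (Iic y) := by
      have hunion : Iic x ∪ Ioc x y = Iic y := Iic_union_Ioc_eq_Iic hxy.le
      have hdisj : Disjoint (Iic x) (Ioc x y) := Iic_disjoint_Ioc le_rfl
      have := measure_union hdisj measurableSet_Ioc (μ := μ)
      rw [hunion] at this
      rw [this]
      exact ENNReal.lt_add_right (measure_ne_top μ _) hIoc.ne'
    by_contra hcon
    push_neg at hcon
    have : μ (Iic y) ≤ μ (Iic x) := by
      rw [← hIic x, ← hIic y]
      exact ENNReal.ofReal_le_ofReal hcon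
    exact absurd hlt (not_lt.2 this)
  -- the map G on the interval
  have hFmem : ∀ x : II, F x.val ∈ II := fun x => ⟨cdf_nonneg μ _, cdf_le_one μ _⟩
  set G : II → II := fun x => ⟨F x.val, hFmem x⟩ with hG
  have hGc : Continuous G := Continuous.subtype_mk (hFc.comp continuous_subtype_val) _
  have hGsm : StrictMono G := by
    intro x y hxy
    exact Subtype.mk_lt_mk.2 (hFs x.2 y.2 (Subtype.coe_lt_coe.2 hxy))
  have hGsurj : Function.Surjective G := by
    intro a
    have hIVT := intermediate_value_Icc (zero_le_one (α := ℝ)) (hFc.continuousOn (s := II))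
    rw [hF0, hF1] at hIVT
    obtain ⟨x, hx, hFx⟩ := hIVT a.2
    exact ⟨⟨x, hx⟩, Subtype.ext hFx⟩
  set e : II ≃ II := Equiv.ofBijective G ⟨hGsm.injective, hGsurj⟩ with he
  have hec : Continuous ⇑e := hGc
  set H : II ≃ₜ II := Continuous.homeoOfEquivCompactToT2 (f := e) hec with hH
  -- σ₀.map G = volume
  have key : σ₀.map G = (volume : Measure II) := by
    haveI : IsFiniteMeasure (σ₀.map G) := by
      constructor
      rw [Measure.map_apply hGc.measurable MeasurableSet.univ, Set.preimage_univ, measure_univ]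
      exact ENNReal.one_lt_top
    refine Measure.ext_of_Iic _ _ (fun a => ?_)
    rw [Measure.map_apply hGc.measurable measurableSet_Iic]
    have hpre : G ⁻¹' (Iic a) = Iic (e.symm a) := by
      ext x
      simp only [Set.mem_preimage, Set.mem_Iic]
      constructor
      · intro h
        have : G x ≤ G (e.symm a) := by
          have : G (e.symm a) = a := e.apply_symm_apply a
          rw [this]; exact h
        exact hGsm.le_iff_le.1 this
      · intro h
        have : G x ≤ G (e.symm a) := hGsm.monotone h
        rwa [show G (e.symm a) = a from e.apply_symm_apply a] at this
    rw [hpre, ← hμIic (e.symm a), ← hIic]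
    have : F (e.symm a).val = a.val := by
      have := e.apply_symm_apply a
      have h2 : (G (e.symm a) : II).val = a.val := congrArg Subtype.val this
      exact h2
    rw [this, hvol_Iic]
  -- Pettis integrals
  obtain ⟨v, hv⟩ := hPettis (g ∘ H.symm) (hg.comp H.symm.continuous)
  obtain ⟨w, hw⟩ := hPettis g hg
  refine ⟨(2:ℝ) • v - w, ?_⟩
  intro e'
  have hcg : Continuous fun x : II => e' (g x) := e'.continuous.comp hg
  have hig : Integrable (fun x : II => e' (g x)) ρ :=
    hcg.integrable_of_hasCompactSupport (HasCompactSupport.of_compactSpace _)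
  have higv : Integrable (fun x : II => e' (g x)) (volume : Measure II) :=
    hcg.integrable_of_hasCompactSupport (HasCompactSupport.of_compactSpace _)
  constructor
  · rw [integrable_map_measure e'.continuous.aestronglyMeasurable hg.measurable.aemeasurable]
    exact hig
  · rw [integral_map hg.measurable.aemeasurable e'.continuous.aestronglyMeasurable]
    -- compute e' v as integral over σ₀
    have hv' := hv e'
    have hcont : Continuous fun t : II => e' (g (H.symm t)) :=
      e'.continuous.comp (hg.comp H.symm.continuous)
    have hstep1 : ∫ t, e' (g (H.symm t)) ∂(volume : Measure II)
        = ∫ s, e' (g s) ∂σ₀ := by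
      rw [← key, integral_map hGc.measurable.aemeasurable hcont.aestronglyMeasurable]
      refine integral_congr_ae (Filter.Eventually.of_forall (fun s => ?_))
      show e' (g (H.symm (G s))) = e' (g s)
      rw [show H.symm (G s) = s from e.symm_apply_apply s]
    have hev : e' v = ∫ s, e' (g s) ∂σ₀ := by
      rw [hv'.2]
      exact hstep1
    -- decompose the σ₀ integral
    have hdecomp : ∫ s, e' (g s) ∂σ₀
        = (2:ℝ)⁻¹ * ((∫ s, e' (g s) ∂ρ) + ∫ s, e' (g s) ∂(volume : Measure II)) := by
      rw [hσ₀, integral_smul_measure, integral_add_measure hig higv]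
      congr 1
      · rw [ENNReal.toReal_inv]
        norm_num
    have hew : e' w = ∫ s, e' (g s) ∂(volume : Measure II) := (hw e').2
    have : e' v = (2:ℝ)⁻¹ * ((∫ s, e' (g s) ∂ρ) + e' w) := by
      rw [hev, hdecomp, hew]
    have hfinal : ∫ s, e' (g s) ∂ρ = 2 * e' v - e' w := by
      rw [this]; ring
    rw [_root_.map_sub, _root_.map_smul]
    rw [hfinal]
    simp [smul_eq_mul]
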